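/- Let Σ be an alphabet, Q a type of states, and let M be a deterministic finite automaton over Σ with state set Q and transition function δ : Q → Σ → Q. Let w = w_1 ⋯ w_N be a word over Σ of length N ≥ 1, and let l = [t_1, …, t_N] be the list in the monoid of self-maps of Q—equipped with the product f * g := g ∘ f (first apply f, then g), whose identity is the identity map—where t_i(q) := δ(q, w_i). Then for every natural number k with 2^k ≥ N, the k-fold iterate of pairStep applied to l equals the one-element list [f], where f(q) = evalFrom(q, w) for every state q, i.e., f sends each state q to the state M reaches from q after reading w. In particular, taking k = ⌈log₂ N⌉, membership of w in the language of M is determined after ⌈log₂ N⌉ rounds of parallel pairwise composition of transition maps. (This is the transition-monoid instantiation underlying the theorem that regular languages are in MDM[log N, N].) -/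

import Mathlib

/-- One round of parallel pairwise combination: replace each consecutive pair of
elements by its product, leaving a final unpaired element unchanged. -/
def pairStep {M : Type*} [Monoid M] : List M → List M
  | [] => []
  | [a] => [a]
  | a :: b :: l => (a * b) :: pairStep l

lemma pairStep_prod {M : Type*} [Monoid M] : ∀ l : List M, (pairStep l).prod = l.prod
  | [] => rfl
  | [a] => rfl
  | a :: b :: l => by
      simp [pairStep, pairStep_prod l, mul_assoc]

lemma pairStep_length {M : Type*} [Monoid M] :
    ∀ l : List M, (pairStep l).length = (l.length + 1) / 2
  | [] => by simp [pairStep]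
  | [a] => by simp [pairStep]
  | a :: b :: l => by
      simp [pairStep, pairStep_length l]
      omega

lemma pairStep_iter {M : Type*} [Monoid M] (k : ℕ) :
    ∀ l : List M, 1 ≤ l.length → l.length ≤ 2 ^ k → pairStep^[k] l = [l.prod] := by
  induction k with
  | zero =>
      intro l h1 h2
      match l, h1, h2 with
      | [a], _, _ => simp
  | succ k ih =>
      intro l h1 h2
      rw [Function.iterate_succ_apply, ih (pairStep l)
        (by rw [pairStep_length]; omega)
        (by rw [pairStep_length]; rw [pow_succ] at h2; omega),
        pairStep_prod]

lemma prod_map_step {α Q : Type*} (M : DFA α Q) : ∀ w : List α,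
    (w.map (fun a => MulOpposite.op (fun q => M.step q a : Function.End Q))
        : List (Function.End Q)ᵐᵒᵖ).prod
      = MulOpposite.op (fun q => M.evalFrom q w : Function.End Q)
  | [] => by
      apply MulOpposite.unop_injective
      funext q
      rfl
  | a :: w => by
      rw [List.map_cons, List.prod_cons, prod_map_step M w]
      apply MulOpposite.unop_injective
      funext q
      rfl

theorem dfa_transition_pairStep {α Q : Type*} (M : DFA α Q) (w : List α)
    (hN : 1 ≤ w.length)
    (l : List (Function.End Q)ᵐᵒᵖ)
    (hl : l = w.map (fun a => MulOpposite.op (fun q => M.step q a : Function.End Q)))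
    (k : ℕ) (hk : w.length ≤ 2 ^ k) :
    pairStep^[k] l = [MulOpposite.op (fun q => M.evalFrom q w : Function.End Q)] := by
  subst hl
  exact (pairStep_iter (M := (Function.End Q)ᵐᵒᵖ) k _ (hN.trans_eq (List.length_map ..).symm)
    ((List.length_map ..).trans_le hk)).trans
    (congrArg (fun x => [x]) (prod_map_step M w))
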